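/- arXiv:1212.1149 — 2 statements merged into one kernel-verified Lean document; each statement's English description precedes it below -/
import Mathlib

section
/- Let α = ((α_1^+,α_1^-),…,(α_n^+,α_n^-)) be a sequence of pairs of nonnegative integers with α_i^- ≤ n − 1 for all i, satisfying only α_i^+ ≥ α_{i+1}^+ for every 1 ≤ i < n (nonincreasing in the first component, with no condition on the second component). If Σ_{i=1}^n α_i^+ = Σ_{i=1}^n α_i^- and for every k with 1 ≤ k < n, Σ_{i=1}^k min(α_i^-, k−1) + Σ_{i=k+1}^n min(α_i^-, k) ≥ Σ_{i=1}^k α_i^+, then α is digraphical, i.e., there exists a loopless digraph on vertices v_1,…,v_n in which v_i has out-degree α_i^+ and in-degree α_i^-. -/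
open Finset

namespace S14

variable {n : ℕ}

def rdeg (E : Finset (Fin n × Fin n)) (i : Fin n) : ℕ := (E.filter (fun e => e.1 = i)).card
def cdeg (E : Finset (Fin n × Fin n)) (j : Fin n) : ℕ := (E.filter (fun e => e.2 = j)).card

def okE (αp αm : Fin n → ℕ) (E : Finset (Fin n × Fin n)) : Prop :=
  (∀ e ∈ E, e.1 ≠ e.2) ∧ (∀ i, rdeg E i ≤ αp i) ∧ (∀ j, cdeg E j ≤ αm j)

def Step (E : Finset (Fin n × Fin n)) : (Fin n ⊕ Fin n) → (Fin n ⊕ Fin n) → Prop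
  | .inl i, .inr j => (i, j) ∉ E ∧ i ≠ j
  | .inr j, .inl i => (i, j) ∈ E
  | _, _ => False

def Reach (E : Finset (Fin n × Fin n)) : ℕ → (Fin n ⊕ Fin n) → (Fin n ⊕ Fin n) → Prop
  | 0, a, b => a = b
  | k+1, a, b => ∃ c, Step E a c ∧ Reach E k c b

lemma sum_rdeg (E : Finset (Fin n × Fin n)) : ∑ i, rdeg E i = E.card := by
  rw [Finset.card_eq_sum_card_fiberwise (f := Prod.fst) (t := univ) (fun x _ => mem_univ _)]
  rfl

lemma sum_cdeg (E : Finset (Fin n × Fin n)) : ∑ j, cdeg E j = E.card := by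
  rw [Finset.card_eq_sum_card_fiberwise (f := Prod.snd) (t := univ) (fun x _ => mem_univ _)]
  rfl

lemma rdeg_insert (E : Finset (Fin n × Fin n)) (e : Fin n × Fin n) (he : e ∉ E) (x : Fin n) :
    rdeg (insert e E) x = rdeg E x + (if e.1 = x then 1 else 0) := by
  unfold rdeg
  rw [filter_insert]
  split
  · rw [card_insert_of_notMem (fun h => he (mem_filter.mp h).1)]
  · simp [rdeg]

lemma cdeg_insert (E : Finset (Fin n × Fin n)) (e : Fin n × Fin n) (he : e ∉ E) (x : Fin n) :
    cdeg (insert e E) x = cdeg E x + (if e.2 = x then 1 else 0) := by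
  unfold cdeg
  rw [filter_insert]
  split
  · rw [card_insert_of_notMem (fun h => he (mem_filter.mp h).1)]
  · simp [cdeg]

lemma rdeg_erase (E : Finset (Fin n × Fin n)) (e : Fin n × Fin n) (he : e ∈ E) (x : Fin n) :
    rdeg E x = rdeg (E.erase e) x + (if e.1 = x then 1 else 0) := by
  have h1 : E = insert e (E.erase e) := (insert_erase he).symm
  have h2 := rdeg_insert (E.erase e) e (notMem_erase _ _) x
  rw [← h1] at h2; exact h2

lemma cdeg_erase (E : Finset (Fin n × Fin n)) (e : Fin n × Fin n) (he : e ∈ E) (x : Fin n) :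
    cdeg E x = cdeg (E.erase e) x + (if e.2 = x then 1 else 0) := by
  have h1 : E = insert e (E.erase e) := (insert_erase he).symm
  have h2 := cdeg_insert (E.erase e) e (notMem_erase _ _) x
  rw [← h1] at h2; exact h2


lemma reach_append (E : Finset (Fin n × Fin n)) :
    ∀ k a b c, Reach E k a b → Step E b c → Reach E (k+1) a c := by
  intro k
  induction k with
  | zero => intro a b c h hs; cases h; exact ⟨c, hs, rfl⟩
  | succ m ih =>
    rintro a b c ⟨d, hd, hr⟩ hs
    exact ⟨d, hd, ih d b c hr hs⟩

/-- Conversion of a path avoiding column `j₁` to the modified arc set. -/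
lemma reach_conv (E E1 : Finset (Fin n × Fin n)) (j j₁ : Fin n)
    (hmem : ∀ a b, b ≠ j₁ → ((a, b) ∈ E1 ↔ (a, b) ∈ E)) (hj : j ≠ j₁) :
    ∀ k a, Reach E k a (.inr j) →
      Reach E1 k a (.inr j) ∨ ∃ m ≤ k, Reach E m (.inr j₁) (.inr j) := by
  intro k
  induction k with
  | zero => intro a h; cases h; exact Or.inl rfl
  | succ m ih =>
    rintro a ⟨c, hs, hr⟩
    by_cases ha : a = Sum.inr j₁
    · exact Or.inr ⟨m + 1, le_rfl, ha ▸ ⟨c, hs, hr⟩⟩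
    by_cases hc : c = Sum.inr j₁
    · exact Or.inr ⟨m, Nat.le_succ m, hc ▸ hr⟩
    rcases ih c hr with h1 | ⟨m', hm', hr'⟩
    · left
      refine ⟨c, ?_, h1⟩
      match a, c, hs with
      | .inl x, .inr y, hs =>
        have hy : y ≠ j₁ := fun h => hc (by rw [h])
        exact ⟨fun h => hs.1 ((hmem x y hy).mp h), hs.2⟩
      | .inr y, .inl x, hs =>
        have hy : y ≠ j₁ := fun h => ha (by rw [h])
        exact (hmem x y hy).mpr hs
    · exact Or.inr ⟨m', hm'.trans (Nat.le_succ m), hr'⟩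

lemma augment (αp αm : Fin n → ℕ) :
    ∀ k E, okE αp αm E → ∀ i j, rdeg E i < αp i → cdeg E j < αm j →
      Reach E k (.inl i) (.inr j) →
      ∃ E', okE αp αm E' ∧ E'.card = E.card + 1 := by
  intro k
  induction k using Nat.strong_induction_on with
  | _ k IH =>
  intro E hok i j hi hj hre
  by_cases hmin : ∃ k' < k, ∃ i' j', rdeg E i' < αp i' ∧ cdeg E j' < αm j' ∧
      Reach E k' (.inl i') (.inr j')
  · obtain ⟨k', hk', i', j', h1, h2, h3⟩ := hmin
    exact IH k' hk' E hok i' j' h1 h2 h3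
  push_neg at hmin
  rcases k with _ | k
  · exact (Sum.inl_ne_inr hre).elim
  rcases k with _ | m
  · -- single step: add the arc
    obtain ⟨c, hs, hr⟩ := hre
    obtain rfl : c = Sum.inr j := hr
    have hs' : (i, j) ∉ E ∧ i ≠ j := hs
    refine ⟨insert (i, j) E, ⟨?_, ?_, ?_⟩, card_insert_of_notMem hs'.1⟩
    · intro e he
      rcases mem_insert.mp he with h | h
      · subst h; exact hs'.2
      · exact hok.1 e h
    · intro x
      rw [rdeg_insert E _ hs'.1]
      by_cases hx : i = x
      · subst hx; simpa using hi
      · simpa [hx] using hok.2.1 x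
    · intro y
      rw [cdeg_insert E _ hs'.1]
      by_cases hy : j = y
      · subst hy; simpa using hj
      · simpa [hy] using hok.2.2 y
  · -- at least two steps
    obtain ⟨c, hs, hr⟩ := hre
    rcases c with c' | j₁
    · exact False.elim hs
    have hs1 : (i, j₁) ∉ E ∧ i ≠ j₁ := hs
    obtain ⟨c₂, hs₂, hr₂⟩ := hr
    rcases c₂ with i₁ | y
    swap
    · exact False.elim hs₂
    have hE : (i₁, j₁) ∈ E := hs₂
    have hjsat : cdeg E j₁ = αm j₁ := by
      by_contra hne
      have hlt : cdeg E j₁ < αm j₁ := lt_of_le_of_ne (hok.2.2 j₁) hne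
      exact hmin 1 (by omega) i j₁ hi hlt ⟨.inr j₁, hs, rfl⟩
    have hjj : j ≠ j₁ := by intro h; subst h; omega
    have hii : i₁ ≠ i := by intro h; subst h; exact hs1.1 hE
    have hnotmem : (i, j₁) ∉ E.erase (i₁, j₁) := fun h => hs1.1 (mem_of_mem_erase h)
    set E1 : Finset (Fin n × Fin n) := insert (i, j₁) (E.erase (i₁, j₁)) with hE1def
    have hcard : E1.card = E.card := by
      rw [hE1def, card_insert_of_notMem hnotmem, card_erase_of_mem hE]
      have : 0 < E.card := card_pos.mpr ⟨_, hE⟩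
      omega
    have hmem : ∀ a b, b ≠ j₁ → ((a, b) ∈ E1 ↔ (a, b) ∈ E) := by
      intro a b hb
      simp only [hE1def, mem_insert, mem_erase, Prod.mk.injEq]
      constructor
      · rintro (⟨h1, h2⟩ | ⟨h1, h2⟩)
        · exact absurd h2 hb
        · exact h2
      · intro h
        right
        exact ⟨fun hh => hb (by simpa using congrArg Prod.snd hh), h⟩
    have h1r : ∀ x, rdeg E1 x = rdeg (E.erase (i₁, j₁)) x + (if i = x then 1 else 0) :=
      fun x => by rw [hE1def, rdeg_insert _ _ hnotmem x]
    have h2r : ∀ x, rdeg E x = rdeg (E.erase (i₁, j₁)) x + (if i₁ = x then 1 else 0) :=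
      fun x => rdeg_erase E _ hE x
    have h1c : ∀ y, cdeg E1 y = cdeg (E.erase (i₁, j₁)) y + (if j₁ = y then 1 else 0) :=
      fun y => by rw [hE1def, cdeg_insert _ _ hnotmem y]
    have h2c : ∀ y, cdeg E y = cdeg (E.erase (i₁, j₁)) y + (if j₁ = y then 1 else 0) :=
      fun y => cdeg_erase E _ hE y
    have hcdeg : ∀ y, cdeg E1 y = cdeg E y := fun y => by rw [h1c y, ← h2c y]
    have hok1 : okE αp αm E1 := by
      refine ⟨?_, ?_, ?_⟩
      · intro e he
        rcases mem_insert.mp he with h | h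
        · subst h; exact hs1.2
        · exact hok.1 e (mem_of_mem_erase h)
      · intro x
        have k1 := h1r x; have k2 := h2r x; have k3 := hok.2.1 x
        by_cases hx : i = x
        · subst hx
          rw [if_pos rfl] at k1; rw [if_neg hii] at k2
          omega
        · rw [if_neg hx] at k1
          omega
      · intro y
        rw [hcdeg y]; exact hok.2.2 y
    have hi₁ : rdeg E1 i₁ < αp i₁ := by
      have k1 := h1r i₁; have k2 := h2r i₁; have k3 := hok.2.1 i₁
      rw [if_neg (fun h => hii h.symm)] at k1
      rw [if_pos rfl] at k2
      omega
    have hj1 : cdeg E1 j < αm j := by rw [hcdeg]; exact hj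
    rcases reach_conv E E1 j j₁ hmem hjj m (.inl i₁) hr₂ with hcv | ⟨m', hm', hr'⟩
    · obtain ⟨E', hE', hc'⟩ := IH m (by omega) E1 hok1 i₁ j hi₁ hj1 hcv
      exact ⟨E', hE', by rw [hc', hcard]⟩
    · exact absurd ⟨.inr j₁, hs, hr'⟩ (hmin (m' + 1) (by omega) i j hi hj)

lemma pointwise_eq_of_sum_eq {f g : Fin n → ℕ} (hle : ∀ i, f i ≤ g i)
    (hsum : ∑ i, g i ≤ ∑ i, f i) : ∀ i, f i = g i := by
  intro i
  by_contra hne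
  have hlt : f i < g i := lt_of_le_of_ne (hle i) hne
  have : ∑ j, f j < ∑ j, g j :=
    Finset.sum_lt_sum (fun j _ => hle j) ⟨i, mem_univ i, hlt⟩
  omega

lemma flow (αp αm : Fin n → ℕ)
    (hsum : ∑ i, αp i = ∑ i, αm i)
    (hC : ∀ S : Finset (Fin n),
      ∑ i ∈ S, αp i ≤ ∑ j ∈ S, min (αm j) (S.card - 1) + ∑ j ∈ Sᶜ, min (αm j) S.card) :
    ∃ E : Finset (Fin n × Fin n), okE αp αm E ∧ (∀ i, rdeg E i = αp i) ∧
      (∀ j, cdeg E j = αm j) := by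
  classical
  have hokEmpty : okE αp αm (∅ : Finset (Fin n × Fin n)) :=
    ⟨by simp, fun i => by simp [rdeg], fun j => by simp [cdeg]⟩
  obtain ⟨E, hEmem, hEmax⟩ := Finset.exists_max_image
    (univ.filter (fun E => okE αp αm E)) Finset.card
    ⟨∅, mem_filter.mpr ⟨mem_univ _, hokEmpty⟩⟩
  have hok : okE αp αm E := (mem_filter.mp hEmem).2
  have hcard : E.card = ∑ i, αp i := by
    have hle : E.card ≤ ∑ i, αp i := by
      rw [← sum_rdeg]; exact sum_le_sum (fun i _ => hok.2.1 i)
    by_contra hne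
    have hlt : E.card < ∑ i, αp i := lt_of_le_of_ne hle hne
    -- a deficient row exists
    have hdef : ∃ i, rdeg E i < αp i := by
      by_contra hall
      push_neg at hall
      have heq : ∀ i, rdeg E i = αp i := fun i => le_antisymm (hok.2.1 i) (hall i)
      have hsr := sum_rdeg E
      rw [Finset.sum_congr rfl (fun i _ => heq i)] at hsr
      rw [show univ.sum αp = ∑ i, αp i from rfl] at hsr
      omega
    obtain ⟨i₀, hi₀⟩ := hdef
    have noaug : ∀ k i j, rdeg E i < αp i → cdeg E j < αm j →
        ¬ Reach E k (.inl i) (.inr j) := by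
      intro k i j h1 h2 h3
      obtain ⟨E', hok', hc'⟩ := augment αp αm k E hok i j h1 h2 h3
      have := hEmax E' (mem_filter.mpr ⟨mem_univ _, hok'⟩)
      omega
    set X : Finset (Fin n) :=
      univ.filter (fun x => ∃ i', rdeg E i' < αp i' ∧ ∃ k, Reach E k (.inl i') (.inl x))
      with hXdef
    set Y : Finset (Fin n) :=
      univ.filter (fun y => ∃ i', rdeg E i' < αp i' ∧ ∃ k, Reach E k (.inl i') (.inr y))
      with hYdef
    have hi₀X : i₀ ∈ X := mem_filter.mpr ⟨mem_univ _, ⟨i₀, hi₀, 0, rfl⟩⟩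
    have hYsat : ∀ y ∈ Y, cdeg E y = αm y := by
      intro y hy
      obtain ⟨i', h1, k, h2⟩ := (mem_filter.mp hy).2
      by_contra hne2
      exact noaug k i' y h1 (lt_of_le_of_ne (hok.2.2 y) hne2) h2
    have hXY : ∀ x ∈ X, ∀ y, (x, y) ∉ E → x ≠ y → y ∈ Y := by
      intro x hx y h1 h2
      obtain ⟨i', ha, k, hb⟩ := (mem_filter.mp hx).2
      exact mem_filter.mpr ⟨mem_univ _,
        ⟨i', ha, k + 1, reach_append E k _ _ _ hb ⟨h1, h2⟩⟩⟩
    have hYX : ∀ y ∈ Y, ∀ x, (x, y) ∈ E → x ∈ X := by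
      intro y hy x h1
      obtain ⟨i', ha, k, hb⟩ := (mem_filter.mp hy).2
      exact mem_filter.mpr ⟨mem_univ _,
        ⟨i', ha, k + 1, reach_append E k _ _ _ hb h1⟩⟩
    set EX : Finset (Fin n × Fin n) := E.filter (fun e => e.1 ∈ X) with hEXdef
    have h1 : ∑ i ∈ X, rdeg E i = EX.card := by
      rw [Finset.card_eq_sum_card_fiberwise (f := Prod.fst) (t := X) (s := EX)
        (fun e he => (mem_filter.mp he).2)]
      apply sum_congr rfl
      intro i hi
      unfold rdeg
      congr 1
      ext e
      simp only [hEXdef, mem_filter]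
      constructor
      · intro h; exact ⟨⟨h.1, h.2 ▸ hi⟩, h.2⟩
      · intro h; exact ⟨h.1.1, h.2⟩
    have h2 : EX.card = ∑ j, (EX.filter (fun e => e.2 = j)).card :=
      Finset.card_eq_sum_card_fiberwise (f := Prod.snd) (t := univ) (fun e _ => mem_univ _)
    have hterm : ∀ j : Fin n,
        (if j ∈ Y then αm j else (X.erase j).card) ≤ (EX.filter (fun e => e.2 = j)).card := by
      intro j
      by_cases hj : j ∈ Y
      · rw [if_pos hj, ← hYsat j hj]
        unfold cdeg
        apply card_le_card
        intro e he
        have he' := mem_filter.mp he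
        refine mem_filter.mpr ⟨mem_filter.mpr ⟨he'.1, hYX j hj e.1 ?_⟩, he'.2⟩
        have heta : (e.1, j) = e := by rw [← he'.2]
        rw [heta]
        exact he'.1
      · rw [if_neg hj]
        have himg : (X.erase j).image (fun x => (x, j)) ⊆ EX.filter (fun e => e.2 = j) := by
          intro e he
          obtain ⟨x, hx, rfl⟩ := Finset.mem_image.mp he
          have hxX : x ∈ X := mem_of_mem_erase hx
          have hxj : x ≠ j := ne_of_mem_erase hx
          have hxE : (x, j) ∈ E := by
            by_contra hne2
            exact hj (hXY x hxX j hne2 hxj)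
          exact mem_filter.mpr ⟨mem_filter.mpr ⟨hxE, hxX⟩, rfl⟩
        calc (X.erase j).card = ((X.erase j).image (fun x => (x, j))).card := by
              rw [Finset.card_image_of_injective _ (fun a b h => (Prod.mk.injEq _ _ _ _).mp h |>.1)]
          _ ≤ _ := card_le_card himg
    have hstrict : ∑ i ∈ X, rdeg E i < ∑ i ∈ X, αp i :=
      Finset.sum_lt_sum (fun i _ => hok.2.1 i) ⟨i₀, hi₀X, hi₀⟩
    have hCX := hC X
    have hsplit : ∑ j ∈ X, min (αm j) (X.card - 1) + ∑ j ∈ Xᶜ, min (αm j) X.card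
        = ∑ j, (if j ∈ X then min (αm j) (X.card - 1) else min (αm j) X.card) := by
      rw [← Finset.sum_add_sum_compl X]
      congr 1
      · exact sum_congr rfl (fun j hj => by rw [if_pos hj])
      · exact sum_congr rfl (fun j hj => by rw [if_neg (mem_compl.mp hj)])
    have hcomp : ∑ j, (if j ∈ X then min (αm j) (X.card - 1) else min (αm j) X.card)
        ≤ ∑ j, (if j ∈ Y then αm j else (X.erase j).card) := by
      apply sum_le_sum
      intro j _
      by_cases hjY : j ∈ Y
      · rw [if_pos hjY]
        split <;> exact min_le_left _ _
      · rw [if_neg hjY]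
        by_cases hjX : j ∈ X
        · rw [if_pos hjX, card_erase_of_mem hjX]
          exact le_trans (min_le_right _ _) le_rfl
        · rw [if_neg hjX, Finset.erase_eq_of_notMem hjX]
          exact min_le_right _ _
    have hfinal : ∑ j, (if j ∈ Y then αm j else (X.erase j).card) ≤ EX.card := by
      rw [h2]
      exact sum_le_sum (fun j _ => hterm j)
    omega
  refine ⟨E, hok, ?_, ?_⟩
  · exact pointwise_eq_of_sum_eq hok.2.1 (by rw [sum_rdeg, hcard])
  · exact pointwise_eq_of_sum_eq hok.2.2 (by rw [sum_cdeg, hcard, hsum])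

variable {n : ℕ}

lemma antitone_of_adj (αp : Fin n → ℕ)
    (hdec : ∀ i j : Fin n, (i : ℕ) + 1 = (j : ℕ) → αp j ≤ αp i) :
    ∀ i j : Fin n, i ≤ j → αp j ≤ αp i := by
  have key : ∀ d (a : ℕ) (h : a + d < n), αp ⟨a + d, h⟩ ≤ αp ⟨a, by omega⟩ := by
    intro d
    induction d with
    | zero => intro a h; exact le_of_eq (congrArg αp (Fin.ext rfl))
    | succ m ih =>
      intro a h
      have h1 : a + m < n := by omega
      calc αp ⟨a + (m+1), h⟩ ≤ αp ⟨a + m, h1⟩ := hdec ⟨a+m, h1⟩ ⟨a+(m+1), h⟩ rfl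
        _ ≤ αp ⟨a, by omega⟩ := ih a h1
  intro i j hij
  have h1 : (i : ℕ) + ((j : ℕ) - i) < n := by omega
  have h2 : αp ⟨(i : ℕ) + ((j : ℕ) - (i : ℕ)), h1⟩ ≤ αp ⟨(i : ℕ), by omega⟩ :=
    key _ _ h1
  have e1 : (⟨(i : ℕ) + ((j : ℕ) - (i : ℕ)), h1⟩ : Fin n) = j := Fin.ext (by
    simp only []
    omega)
  have e2 : (⟨(i : ℕ), by omega⟩ : Fin n) = i := Fin.ext rfl
  rwa [e1, e2] at h2

lemma card_filter_val_lt (m : ℕ) :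
    ((univ : Finset (Fin n)).filter (fun j : Fin n => (j : ℕ) < m)).card = min m n := by
  classical
  rw [← Finset.card_image_of_injective _ Fin.val_injective]
  have h : (univ.filter (fun j : Fin n => (j : ℕ) < m)).image Fin.val
      = Finset.range (min m n) := by
    ext a
    simp only [Finset.mem_image, Finset.mem_range, mem_filter, mem_univ, true_and]
    constructor
    · rintro ⟨j, hj, rfl⟩; exact lt_min hj j.isLt
    · intro ha
      refine ⟨⟨a, by omega⟩, ?_, rfl⟩
      show a < m
      omega
  rw [h, Finset.card_range]

lemma mem_prefix_iff (P : Fin n → Prop) [DecidablePred P]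
    (hmono : ∀ i j : Fin n, i ≤ j → P j → P i) (i : Fin n) :
    P i ↔ (i : ℕ) < (univ.filter (fun x : Fin n => P x)).card := by
  classical
  constructor
  · intro hPi
    have hsub : univ.filter (fun j : Fin n => (j : ℕ) < (i : ℕ) + 1) ⊆
        univ.filter (fun x : Fin n => P x) := by
      intro j hj
      have hj' : (j : ℕ) < (i : ℕ) + 1 := (mem_filter.mp hj).2
      exact mem_filter.mpr ⟨mem_univ _, hmono j i (Fin.le_def.mpr (by omega)) hPi⟩
    have hcc := card_le_card hsub
    rw [card_filter_val_lt] at hcc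
    have hlt : (i : ℕ) < n := i.isLt
    omega
  · intro hc
    by_contra hPi
    have hsub : univ.filter (fun x : Fin n => P x) ⊆
        univ.filter (fun j : Fin n => (j : ℕ) < (i : ℕ)) := by
      intro j hj
      have hPj : P j := (mem_filter.mp hj).2
      refine mem_filter.mpr ⟨mem_univ _, ?_⟩
      by_contra hge
      exact hPi (hmono i j (Fin.le_def.mpr (by omega)) hPj)
    have hcc := card_le_card hsub
    rw [card_filter_val_lt] at hcc
    omega

lemma card_filter_band (p q : ℕ) (hpq : p ≤ q) (hq : q ≤ n) :
    ((univ : Finset (Fin n)).filter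
      (fun x : Fin n => p ≤ (x : ℕ) ∧ (x : ℕ) < q)).card = q - p := by
  classical
  have hsplit : (univ : Finset (Fin n)).filter (fun j : Fin n => (j : ℕ) < q) =
      (univ.filter (fun j : Fin n => (j : ℕ) < p)) ∪
      (univ.filter (fun x : Fin n => p ≤ (x : ℕ) ∧ (x : ℕ) < q)) := by
    ext x
    simp only [mem_filter, mem_univ, true_and, Finset.mem_union]
    omega
  have hdisj : Disjoint (univ.filter (fun j : Fin n => (j : ℕ) < p))
      (univ.filter (fun x : Fin n => p ≤ (x : ℕ) ∧ (x : ℕ) < q)) := by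
    rw [Finset.disjoint_left]
    intro x hx hx'
    have h1 := (mem_filter.mp hx).2
    have h2 := (mem_filter.mp hx').2
    omega
  have hcard := congrArg Finset.card hsplit
  rw [Finset.card_union_of_disjoint hdisj, card_filter_val_lt, card_filter_val_lt] at hcard
  omega

variable (αp αm : Fin n → ℕ) (p q β : ℕ)

def Mf (j : ℕ) : ℕ := ∑ x, min (αm x) j
def cf (j : ℕ) : ℕ := (univ.filter (fun x : Fin n => (x : ℕ) < p ∧ j ≤ αm x)).card
def Yf (j : ℕ) : ℕ :=
  (univ.filter (fun x : Fin n => p ≤ (x : ℕ) ∧ (x : ℕ) < q ∧ j ≤ αm x)).card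
def Rf (j : ℕ) : ℕ := (univ.filter (fun x : Fin n => q ≤ (x : ℕ) ∧ j ≤ αm x)).card
def tf (j : ℕ) : ℕ := (univ.filter (fun x : Fin n => j ≤ αm x)).card
def Pp : ℕ := ∑ x ∈ univ.filter (fun x : Fin n => (x : ℕ) < p), αp x
def Bf (j : ℕ) : ℤ := cf αm p j + min ((j : ℤ) - p) (Yf αm p q j)
def Ff (j : ℕ) : ℤ :=
  (Mf αm j : ℤ) - Pp αp p - ((j : ℤ) - p) * β - Bf αm p q j
def hff (m : ℕ) : ℤ :=
  Bf αm p q m + max 0 ((Yf αm p q (m+1) : ℤ) - ((m : ℤ) + 1 - p)) + Rf αm q (m+1)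

lemma cf_anti {a b : ℕ} (hab : a ≤ b) : cf αm p b ≤ cf αm p a := by
  apply card_le_card
  intro x hx
  have h := (mem_filter.mp hx).2
  exact mem_filter.mpr ⟨mem_univ _, by omega⟩

lemma Yf_anti {a b : ℕ} (hab : a ≤ b) : Yf αm p q b ≤ Yf αm p q a := by
  apply card_le_card
  intro x hx
  have h := (mem_filter.mp hx).2
  exact mem_filter.mpr ⟨mem_univ _, by omega⟩

lemma Rf_anti {a b : ℕ} (hab : a ≤ b) : Rf αm q b ≤ Rf αm q a := by
  apply card_le_card
  intro x hx
  have h := (mem_filter.mp hx).2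
  exact mem_filter.mpr ⟨mem_univ _, by omega⟩

lemma tf_part (hpq : p ≤ q) (j : ℕ) :
    tf αm j = cf αm p j + Yf αm p q j + Rf αm q j := by
  unfold tf cf Yf Rf
  rw [Finset.card_filter, Finset.card_filter, Finset.card_filter, Finset.card_filter,
    ← Finset.sum_add_distrib, ← Finset.sum_add_distrib]
  apply sum_congr rfl
  intro x _
  split_ifs <;> omega

lemma Mf_step (j : ℕ) : Mf αm (j+1) = Mf αm j + tf αm (j+1) := by
  unfold Mf tf
  rw [Finset.card_filter, ← Finset.sum_add_distrib]
  apply sum_congr rfl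
  intro x _
  split_ifs <;> omega

lemma Ff_step (m : ℕ) (hpm : p ≤ m) (hpq : p ≤ q) :
    Ff αp αm p q β (m+1) - Ff αp αm p q β m = hff αm p q m - β := by
  unfold Ff hff Bf
  rw [Mf_step αm m, tf_part αm p q hpq (m+1)]
  push_cast
  have h1 : ((m : ℤ) + 1) - p ≥ 0 := by omega
  have hprod : ((m : ℤ) + 1 - p) * β - ((m : ℤ) - p) * β = β := by ring
  omega

lemma Ff_tele (a : ℕ) (hpa : p ≤ a) (hpq : p ≤ q) :
    ∀ d, Ff αp αm p q β (a + d) =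
      Ff αp αm p q β a + ∑ m ∈ Finset.range d, (hff αm p q (a + m) - β) := by
  intro d
  induction d with
  | zero => simp
  | succ e ih =>
    have hstep := Ff_step αp αm p q β (a + e) (by omega) hpq
    rw [Finset.sum_range_succ]
    have h2 : a + (e + 1) = (a + e) + 1 := by omega
    rw [h2]
    omega

lemma star_ineq (m m' : ℕ) (hpm : p ≤ m) (hmm : m < m') :
    hff αm p q m' ≤ hff αm p q m + 1 := by
  unfold hff Bf
  have h1 : cf αm p m' ≤ cf αm p m := cf_anti αm p (by omega)
  have h2 : Rf αm q (m'+1) ≤ Rf αm q (m+1) := Rf_anti αm q (by omega)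
  have h3 : Yf αm p q (m+1) ≤ Yf αm p q m := Yf_anti αm p q (by omega)
  have h4 : Yf αm p q m' ≤ Yf αm p q (m+1) := Yf_anti αm p q (by omega)
  have h5 : Yf αm p q (m'+1) ≤ Yf αm p q m' := Yf_anti αm p q (by omega)
  omega

lemma subset_cond (αp αm : Fin n → ℕ)
    (hdec : ∀ i j : Fin n, (i : ℕ) + 1 = (j : ℕ) → αp j ≤ αp i)
    (hub : ∀ i, αm i ≤ n - 1)
    (hsum : (∑ i, αp i) = ∑ i, αm i)
    (hfc : ∀ k : ℕ, 1 ≤ k → k < n →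
      (∑ i : Fin n, if (i : ℕ) < k then αp i else 0) ≤
        ∑ i : Fin n, if (i : ℕ) < k then min (αm i) (k - 1) else min (αm i) k) :
    ∀ S : Finset (Fin n), ∑ i ∈ S, αp i ≤
      ∑ j ∈ S, min (αm j) (S.card - 1) + ∑ j ∈ Sᶜ, min (αm j) S.card := by
  classical
  intro S
  rcases Nat.eq_zero_or_pos S.card with hk0 | hk1
  · rw [Finset.card_eq_zero.mp hk0]
    simp
  set k := S.card with hk
  have hkn : k ≤ n := by
    have := Finset.card_le_univ S
    simpa using this
  have hn1 : 1 ≤ n := by omega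
  have hanti := antitone_of_adj αp hdec
  set β := αp ⟨k - 1, by omega⟩ with hβ
  set p := (univ.filter (fun x : Fin n => β < αp x)).card with hp
  set q := (univ.filter (fun x : Fin n => β ≤ αp x)).card with hq
  have hchar1 : ∀ i : Fin n, β < αp i ↔ (i : ℕ) < p :=
    mem_prefix_iff _ (fun i j hij h => lt_of_lt_of_le h (hanti i j hij))
  have hchar2 : ∀ i : Fin n, β ≤ αp i ↔ (i : ℕ) < q :=
    mem_prefix_iff _ (fun i j hij h => le_trans h (hanti i j hij))
  have hpk : p ≤ k - 1 := by
    have h1 : ¬ (β < αp ⟨k - 1, by omega⟩) := lt_irrefl _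
    have h2 := (hchar1 ⟨k - 1, by omega⟩).mpr
    by_contra hcon
    exact h1 (h2 (by simpa using by omega))
  have hkq : k ≤ q := by
    have h2 := (hchar2 ⟨k - 1, by omega⟩).mp le_rfl
    simp only [] at h2
    omega
  have hqn : q ≤ n := by
    have := Finset.card_filter_le (univ : Finset (Fin n)) (fun x : Fin n => β ≤ αp x)
    simpa using this
  have hpq : p ≤ q := by omega
  have hpn : p < n := by omega
  have hband : ∀ x : Fin n, p ≤ (x : ℕ) → (x : ℕ) < q → αp x = β := by
    intro x h1 h2
    have l1 : ¬ β < αp x := fun hh => by have := (hchar1 x).mp hh; omega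
    have l2 : β ≤ αp x := (hchar2 x).mpr h2
    omega
  have hpeq : (univ.filter (fun x : Fin n => (x : ℕ) < p)).card = p := by
    have : univ.filter (fun x : Fin n => (x : ℕ) < p)
        = univ.filter (fun x : Fin n => β < αp x) := by
      ext x
      simp only [mem_filter, mem_univ, true_and]
      exact (hchar1 x).symm
    rw [this]
  have hFp : 0 ≤ Ff αp αm p q β p := by
    have hYnn : (0 : ℤ) ≤ (Yf αm p q p : ℤ) := Int.natCast_nonneg _
    rcases Nat.eq_zero_or_pos p with hp0 | hp1
    · have h1 : Mf αm p = 0 := by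
        rw [hp0]; unfold Mf; simp
      have h2 : Pp αp p = 0 := by
        rw [hp0]; unfold Pp
        rw [Finset.sum_eq_zero]
        intro x hx
        exact absurd ((mem_filter.mp hx).2) (by omega)
      have h3 : cf αm p p = 0 := by
        rw [hp0]; unfold cf
        rw [Finset.card_eq_zero]
        rw [Finset.filter_eq_empty_iff]
        intro x _
        omega
      unfold Ff Bf
      rw [h1, h2, h3, hp0]
      push_cast
      have : ((0 : ℤ) - 0) * β = 0 := by ring
      omega
    · have hfcp := hfc p hp1 hpn
      have hL : (∑ i : Fin n, if (i : ℕ) < p then αp i else 0) = Pp αp p :=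
        (Finset.sum_filter _ _).symm
      have hR : (∑ i : Fin n, if (i : ℕ) < p then min (αm i) (p - 1) else min (αm i) p)
          + cf αm p p = Mf αm p := by
        unfold cf Mf
        rw [Finset.card_filter, ← Finset.sum_add_distrib]
        apply sum_congr rfl
        intro x _
        split_ifs <;> omega
      have hB : Bf αm p q p = cf αm p p := by
        unfold Bf
        have hm : min ((p : ℤ) - p) (Yf αm p q p) = 0 := by omega
        rw [hm]; ring
      unfold Ff
      rw [hB]
      rw [hL] at hfcp
      have hzero : ((p : ℤ) - p) * β = 0 := by ring
      omega
  have hFq : 0 ≤ Ff αp αm p q β q := by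
    have hq1 : 1 ≤ q := by omega
    have hYq : Yf αm p q q ≤ q - p := by
      have hsub : univ.filter (fun x : Fin n => p ≤ (x : ℕ) ∧ (x : ℕ) < q ∧ q ≤ αm x)
          ⊆ univ.filter (fun x : Fin n => p ≤ (x : ℕ) ∧ (x : ℕ) < q) := by
        intro x hx
        have h := (mem_filter.mp hx).2
        exact mem_filter.mpr ⟨mem_univ _, by omega⟩
      have := card_le_card hsub
      rw [card_filter_band p q hpq hqn] at this
      exact this
    have hBq : Bf αm p q q = cf αm p q + Yf αm p q q := by
      unfold Bf
      have hm : min ((q : ℤ) - p) (Yf αm p q q) = Yf αm p q q := by omega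
      rw [hm]
    have hdisj : Disjoint (univ.filter (fun x : Fin n => (x : ℕ) < p))
        (univ.filter (fun x : Fin n => p ≤ (x : ℕ) ∧ (x : ℕ) < q)) := by
      rw [Finset.disjoint_left]
      intro x hx hx'
      have h1 := (mem_filter.mp hx).2
      have h2 := (mem_filter.mp hx').2
      omega
    have hsplitq : univ.filter (fun x : Fin n => (x : ℕ) < q) =
        (univ.filter (fun x : Fin n => (x : ℕ) < p)) ∪
        (univ.filter (fun x : Fin n => p ≤ (x : ℕ) ∧ (x : ℕ) < q)) := by
      ext x
      simp only [mem_filter, mem_univ, true_and, Finset.mem_union]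
      omega
    have hPq : (∑ x ∈ univ.filter (fun x : Fin n => (x : ℕ) < q), αp x)
        = Pp αp p + (q - p) * β := by
      rw [hsplitq, Finset.sum_union hdisj]
      unfold Pp
      congr 1
      rw [Finset.sum_congr rfl (fun x hx => by
        have h := (mem_filter.mp hx).2
        exact hband x h.1 h.2)]
      rw [Finset.sum_const, card_filter_band p q hpq hqn, smul_eq_mul]
    have hcq : cf αm p q + Yf αm p q q
        = (univ.filter (fun x : Fin n => (x : ℕ) < q ∧ q ≤ αm x)).card := by
      unfold cf Yf
      rw [Finset.card_filter, Finset.card_filter, Finset.card_filter,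
        ← Finset.sum_add_distrib]
      apply sum_congr rfl
      intro x _
      split_ifs <;> omega
    rcases Nat.lt_or_ge q n with hqlt | hqge
    · have hfcq := hfc q hq1 hqlt
      have hL : (∑ i : Fin n, if (i : ℕ) < q then αp i else 0)
          = ∑ x ∈ univ.filter (fun x : Fin n => (x : ℕ) < q), αp x :=
        (Finset.sum_filter _ _).symm
      have hR : (∑ i : Fin n, if (i : ℕ) < q then min (αm i) (q - 1) else min (αm i) q)
          + (univ.filter (fun x : Fin n => (x : ℕ) < q ∧ q ≤ αm x)).card = Mf αm q := by
        unfold Mf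
        rw [Finset.card_filter, ← Finset.sum_add_distrib]
        apply sum_congr rfl
        intro x _
        split_ifs <;> omega
      rw [hL, hPq] at hfcq
      have hkey : Pp αp p + (q - p) * β +
          ((univ.filter (fun x : Fin n => (x : ℕ) < q ∧ q ≤ αm x)).card + Yf αm p q q)
          ≤ Mf αm q + Yf αm p q q := by omega
      have hkey2 : Pp αp p + (q - p) * β + (cf αm p q + Yf αm p q q) ≤ Mf αm q := by omega
      unfold Ff
      rw [hBq]
      have hcast : ((q : ℤ) - p) * β = (((q - p : ℕ) : ℤ)) * β := by
        rw [Nat.cast_sub hpq]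
      rw [hcast]
      zify at hkey2
      omega
    · have hqn' : q = n := by omega
      have hMn : Mf αm q = ∑ i, αm i := by
        rw [hqn']; unfold Mf
        apply sum_congr rfl
        intro x _
        have := hub x
        omega
      have hPn : (∑ x ∈ univ.filter (fun x : Fin n => (x : ℕ) < q), αp x) = ∑ i, αp i := by
        rw [hqn']
        rw [Finset.filter_true_of_mem (fun x _ => x.isLt)]
      have hzeroc : (univ.filter (fun x : Fin n => (x : ℕ) < q ∧ q ≤ αm x)).card = 0 := by
        rw [hqn', Finset.card_eq_zero, Finset.filter_eq_empty_iff]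
        intro x _
        have := hub x
        omega
      unfold Ff
      rw [hBq]
      have hcast : ((q : ℤ) - p) * β = (((q - p : ℕ) : ℤ)) * β := by
        rw [Nat.cast_sub hpq]
      rw [hcast]
      have h1 : Pp αp p + (q - p) * β = ∑ i, αp i := by rw [← hPq, hPn]
      have h2 : cf αm p q + Yf αm p q q = 0 := by omega
      have hkey2 : Pp αp p + (q - p) * β + (cf αm p q + Yf αm p q q) ≤ Mf αm q := by
        rw [h2, h1, hMn, hsum]
        omega
      zify at hkey2
      omega
  have hFkMARK : 0 ≤ Ff αp αm p q β k := by
    by_cases hall : ∀ m ∈ Finset.range (k - p), β ≤ hff αm p q (p + m)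
    · have htele := Ff_tele αp αm p q β p le_rfl hpq (k - p)
      rw [show p + (k - p) = k by omega] at htele
      have hsum0 : 0 ≤ ∑ m ∈ Finset.range (k - p), (hff αm p q (p + m) - β) :=
        Finset.sum_nonneg (fun m hm => by have := hall m hm; omega)
      omega
    · push_neg at hall
      obtain ⟨m₀, hm₀r, hm₀⟩ := hall
      have hm₀r' := Finset.mem_range.mp hm₀r
      have htele := Ff_tele αp αm p q β k (by omega) hpq (q - k)
      rw [show k + (q - k) = q by omega] at htele
      have hterm : ∀ m ∈ Finset.range (q - k), hff αm p q (k + m) - (β : ℤ) ≤ 0 := by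
        intro m hm
        have hstar := star_ineq αm p q (p + m₀) (k + m) (by omega) (by omega)
        omega
      have hsum0 : ∑ m ∈ Finset.range (q - k), (hff αm p q (k + m) - (β : ℤ)) ≤ 0 :=
        Finset.sum_nonpos hterm
      omega
  -- reduce the goal to: ∑_{i ∈ S} αp i + cnt ≤ Mf k
  set cnt := (S.filter (fun j => k ≤ αm j)).card with hcnt
  have hred : ∑ j ∈ S, min (αm j) (k - 1) + ∑ j ∈ Sᶜ, min (αm j) k + cnt = Mf αm k := by
    have hMsplit : Mf αm k = ∑ j ∈ S, min (αm j) k + ∑ j ∈ Sᶜ, min (αm j) k := by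
      unfold Mf
      rw [← Finset.sum_add_sum_compl S]
    have hSmin : ∑ j ∈ S, min (αm j) k = ∑ j ∈ S, min (αm j) (k - 1) + cnt := by
      rw [hcnt, Finset.card_filter, ← Finset.sum_add_distrib]
      apply sum_congr rfl
      intro x _
      split_ifs <;> omega
    omega
  have hmain : ∑ i ∈ S, αp i + cnt ≤ Mf αm k := by
    set f : Fin n → ℕ := fun x => αp x + (if k ≤ αm x then 1 else 0) with hfdef
    have hfS : ∑ x ∈ S, f x = ∑ i ∈ S, αp i + cnt := by
      rw [hfdef, Finset.sum_add_distrib, hcnt, Finset.card_filter]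
    set S1 := S.filter (fun x : Fin n => (x : ℕ) < p) with hS1
    set S2 := S.filter (fun x : Fin n => p ≤ (x : ℕ) ∧ (x : ℕ) < q) with hS2
    set S3 := S.filter (fun x : Fin n => q ≤ (x : ℕ)) with hS3
    have hsplitS : ∑ x ∈ S, f x = ∑ x ∈ S1, f x + ∑ x ∈ S2, f x + ∑ x ∈ S3, f x := by
      rw [hS1, hS2, hS3, Finset.sum_filter, Finset.sum_filter, Finset.sum_filter,
        ← Finset.sum_add_distrib, ← Finset.sum_add_distrib]
      apply sum_congr rfl
      intro x _
      split_ifs <;> omega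
    have hcards : S1.card + S2.card + S3.card = k := by
      rw [hk, Finset.card_eq_sum_ones S, hS1, hS2, hS3, Finset.card_filter,
        Finset.card_filter, Finset.card_filter, ← Finset.sum_add_distrib,
        ← Finset.sum_add_distrib]
      apply sum_congr rfl
      intro x _
      split_ifs <;> omega
    have hs1p : S1.card ≤ p := by
      rw [← hpeq]
      apply card_le_card
      intro x hx
      exact mem_filter.mpr ⟨mem_univ _, (mem_filter.mp hx).2⟩
    -- Bound 1
    have hS1sub : S1 ⊆ univ.filter (fun x : Fin n => (x : ℕ) < p) := by
      intro x hx
      exact mem_filter.mpr ⟨mem_univ _, (mem_filter.mp hx).2⟩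
    have hPC : ∑ x ∈ univ.filter (fun x : Fin n => (x : ℕ) < p), f x
        = Pp αp p + cf αm p k := by
      rw [hfdef]
      rw [Finset.sum_add_distrib]
      congr 1
      unfold cf
      rw [Finset.sum_filter, Finset.card_filter]
      apply sum_congr rfl
      intro x _
      split_ifs <;> omega
    have hsdiff : ∑ x ∈ (univ.filter (fun x : Fin n => (x : ℕ) < p)) \ S1, f x
        + ∑ x ∈ S1, f x = Pp αp p + cf αm p k := by
      rw [Finset.sum_sdiff hS1sub, hPC]
    have hcsdiff : ((univ.filter (fun x : Fin n => (x : ℕ) < p)) \ S1).card = p - S1.card := by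
      rw [Finset.card_sdiff_of_subset hS1sub, hpeq]
    have hlb : ∀ x ∈ (univ.filter (fun x : Fin n => (x : ℕ) < p)) \ S1, β + 1 ≤ f x := by
      intro x hx
      have hxp : (x : ℕ) < p := (mem_filter.mp (Finset.mem_sdiff.mp hx).1).2
      have := (hchar1 x).mpr hxp
      rw [hfdef]
      simp only []
      omega
    have hB1 : ∑ x ∈ S1, f x + (p - S1.card) * (β + 1) ≤ Pp αp p + cf αm p k := by
      have hns := Finset.card_nsmul_le_sum _ f (β + 1) hlb
      rw [hcsdiff, smul_eq_mul] at hns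
      have hzx : ((univ.filter (fun x : Fin n => (x : ℕ) < p)) \ S1).sum f
          = ∑ x ∈ (univ.filter (fun x : Fin n => (x : ℕ) < p)) \ S1, f x := rfl
      omega
    -- Bound 2
    have hB2 : ∑ x ∈ S2, f x ≤ S2.card * β + min S2.card (Yf αm p q k) := by
      have hap : ∑ x ∈ S2, αp x = S2.card * β := by
        rw [Finset.sum_congr rfl (fun x hx => by
          have h := (mem_filter.mp hx).2
          exact hband x h.1 h.2), Finset.sum_const, smul_eq_mul]
      have hchi : ∑ x ∈ S2, (if k ≤ αm x then 1 else 0) = (S2.filter (fun x => k ≤ αm x)).card :=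
        (Finset.card_filter _ _).symm
      have hc2a : (S2.filter (fun x => k ≤ αm x)).card ≤ S2.card := Finset.card_filter_le _ _
      have hc2b : (S2.filter (fun x => k ≤ αm x)).card ≤ Yf αm p q k := by
        unfold Yf
        apply card_le_card
        intro x hx
        have h1 := (mem_filter.mp hx).2
        have h2 := (mem_filter.mp (Finset.mem_of_mem_filter x hx)).2
        exact mem_filter.mpr ⟨mem_univ _, h2.1, h2.2, h1⟩
      rw [hfdef, Finset.sum_add_distrib, hap, hchi]
      have := le_min hc2a hc2b
      omega
    -- Bound 3
    have hB3 : ∑ x ∈ S3, f x ≤ S3.card * β := by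
      have : ∀ x ∈ S3, f x ≤ β := by
        intro x hx
        have hxq : q ≤ (x : ℕ) := (mem_filter.mp hx).2
        have hlt : ¬ β ≤ αp x := fun hh => by have := (hchar2 x).mp hh; omega
        rw [hfdef]
        simp only []
        have hite : (if k ≤ αm x then 1 else 0) ≤ 1 := by split_ifs <;> omega
        omega
      have := Finset.sum_le_card_nsmul _ f β this
      rwa [smul_eq_mul] at this
    -- combine everything over ℤ
    have hFku : (Pp αp p : ℤ) + ((k : ℤ) - p) * β + cf αm p k
        + min ((k : ℤ) - p) (Yf αm p q k) ≤ Mf αm k := by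
      have hthis := hFkMARK
      unfold Ff Bf at hthis
      omega
    have hs2k : S2.card + S1.card ≤ k := by omega
    zify [hs1p] at hfS hsplitS hB1 hB2 hB3 hcards hs2k
    have hpkZ : (p : ℤ) ≤ (k : ℤ) := by
      have : p ≤ k := by omega
      exact_mod_cast this
    have hs1pZ : (S1.card : ℤ) ≤ (p : ℤ) := by exact_mod_cast hs1p
    have hlin : ((S2.card : ℤ)) + ((S3.card : ℤ))
        = ((k : ℤ) - p) + (((p : ℤ) - S1.card)) := by omega
    have hprod : ((S2.card : ℤ)) * β + ((S3.card : ℤ)) * β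
        = ((k : ℤ) - p) * β + (((p : ℤ) - S1.card)) * β := by
      linear_combination (β : ℤ) * hlin
    have hminrel : min ((S2.card : ℤ)) ((Yf αm p q k : ℤ))
        ≤ min ((k : ℤ) - p) ((Yf αm p q k : ℤ)) + (((p : ℤ) - S1.card)) := by omega
    have hZ : (∑ i ∈ S, αp i : ℤ) + cnt ≤ (Mf αm k : ℤ) := by
      linarith [hB1, hB2, hB3, hfS, hsplitS, hprod, hminrel, hFku]
    exact_mod_cast hZ
  omega

end S14

/-- `A` is a zero-one matrix. -/
def ZeroOne (n : ℕ) (A : Fin n → Fin n → ℕ) : Prop :=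
  ∀ i j, A i j = 0 ∨ A i j = 1

/-- `A` has zero diagonal (no loops). -/
def ZeroDiag (n : ℕ) (A : Fin n → Fin n → ℕ) : Prop :=
  ∀ i, A i i = 0

/-- Out-degree of vertex `i` (row sum). -/
def outdeg (n : ℕ) (A : Fin n → Fin n → ℕ) (i : Fin n) : ℕ := ∑ j, A i j

/-- In-degree of vertex `j` (column sum). -/
def indeg (n : ℕ) (A : Fin n → Fin n → ℕ) (j : Fin n) : ℕ := ∑ i, A i j

/-- `G` contains a 2-switch: four distinct vertices `w,x,y,z` with arcs `(w,x)`, `(y,z)`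
and non-arcs `(w,z)`, `(y,x)`. -/
def HasTwoSwitch (n : ℕ) (A : Fin n → Fin n → ℕ) : Prop :=
  ∃ w x y z : Fin n, w ≠ x ∧ w ≠ y ∧ w ≠ z ∧ x ≠ y ∧ x ≠ z ∧ y ≠ z ∧
    A w x = 1 ∧ A y z = 1 ∧ A w z = 0 ∧ A y x = 0

/-- `G` contains an induced directed 3-cycle on three distinct vertices `x,y,z`. -/
def HasInducedC3 (n : ℕ) (A : Fin n → Fin n → ℕ) : Prop :=
  ∃ x y z : Fin n, x ≠ y ∧ x ≠ z ∧ y ≠ z ∧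
    A x y = 1 ∧ A y z = 1 ∧ A z x = 1 ∧
    A y x = 0 ∧ A z y = 0 ∧ A x z = 0

/-- The degree sequence `(p i, m i)` is in positive lexicographic order. -/
def PosLex (n : ℕ) (p m : Fin n → ℕ) : Prop :=
  ∀ i j : Fin n, (i : ℕ) + 1 = (j : ℕ) →
    p j ≤ p i ∧ (p i = p j → m j ≤ m i)

/-- Condition (3): for distinct `i, j, k` with `i < j`, `a_{jk} = 1` implies `a_{ik} = 1`. -/
def Nested (n : ℕ) (A : Fin n → Fin n → ℕ) : Prop :=
  ∀ i j k : Fin n, i ≠ j → i ≠ k → j ≠ k → i < j → A j k = 1 → A i k = 1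

/-- `A` is the unique zero-one matrix with zero diagonal having its row and column sums. -/
def UniqueRealization (n : ℕ) (A : Fin n → Fin n → ℕ) : Prop :=
  ∀ B : Fin n → Fin n → ℕ, ZeroOne n B → ZeroDiag n B →
    (∀ i, outdeg n B i = outdeg n A i) → (∀ j, indeg n B j = indeg n A j) → B = A

/-- Theorem 3: for a sequence that is merely nonincreasing in the
first component, equal degree sums together with the Fulkerson–Chen inequalities
for `1 ≤ k < n` imply that the sequence is digraphical. -/
theorem stmt14 (n : ℕ) (αp αm : Fin n → ℕ)
    (hdec : ∀ i j : Fin n, (i : ℕ) + 1 = (j : ℕ) → αp j ≤ αp i)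
    (hub : ∀ i, αm i ≤ n - 1)
    (hsum : (∑ i, αp i) = ∑ i, αm i)
    (hfc : ∀ k : ℕ, 1 ≤ k → k < n →
      (∑ i : Fin n, if (i : ℕ) < k then αp i else 0) ≤
        ∑ i : Fin n, if (i : ℕ) < k then min (αm i) (k - 1) else min (αm i) k) :
    ∃ A : Fin n → Fin n → ℕ, ZeroOne n A ∧ ZeroDiag n A ∧
      (∀ i, outdeg n A i = αp i) ∧ (∀ j, indeg n A j = αm j) := by
  classical
  have hC := S14.subset_cond αp αm hdec hub hsum hfc
  obtain ⟨E, hok, hrd, hcd⟩ := S14.flow αp αm hsum (fun S => by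
    have h := hC S
    exact h)
  refine ⟨fun i j => if (i, j) ∈ E then 1 else 0, ?_, ?_, ?_, ?_⟩
  · intro i j
    dsimp only
    split_ifs <;> simp
  · intro i
    dsimp only
    exact if_neg (fun h => (hok.1 (i, i) h) rfl)
  · intro i
    rw [← hrd i]
    unfold outdeg S14.rdeg
    dsimp only
    rw [← Finset.card_filter]
    apply Finset.card_bij (fun j _ => (i, j))
    · intro a ha
      exact Finset.mem_filter.mpr ⟨(Finset.mem_filter.mp ha).2, rfl⟩
    · intro a _ b _ hab
      exact (Prod.mk.injEq _ _ _ _).mp hab |>.2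
    · intro e he
      have he' := Finset.mem_filter.mp he
      refine ⟨e.2, Finset.mem_filter.mpr ⟨Finset.mem_univ _, ?_⟩, ?_⟩
      · have h2 : (e.1, e.2) ∈ E := by
          rw [show ((e.1, e.2) : Fin n × Fin n) = e from rfl]
          exact he'.1
        rwa [he'.2] at h2
      · rw [← he'.2]
  · intro j
    rw [← hcd j]
    unfold indeg S14.cdeg
    dsimp only
    rw [← Finset.card_filter]
    apply Finset.card_bij (fun i _ => (i, j))
    · intro a ha
      exact Finset.mem_filter.mpr ⟨(Finset.mem_filter.mp ha).2, rfl⟩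
    · intro a _ b _ hab
      exact (Prod.mk.injEq _ _ _ _).mp hab |>.1
    · intro e he
      have he' := Finset.mem_filter.mp he
      refine ⟨e.1, Finset.mem_filter.mpr ⟨Finset.mem_univ _, ?_⟩, ?_⟩
      · have h2 : (e.1, e.2) ∈ E := by
          rw [show ((e.1, e.2) : Fin n × Fin n) = e from rfl]
          exact he'.1
        rwa [he'.2] at h2
      · rw [← he'.2]
end

section
/- Let A = [a_ij] be an n×n zero-one matrix with zero diagonal and column sums α_j^- = Σ_i a_ij, and suppose that for every triple of distinct indices i, j, k with i < j, a_jk = 1 implies a_ik = 1. Then for every k with 1 ≤ k ≤ n and every column index j: if j ≤ k then Σ_{i=1}^k a_ij = min(α_j^-, k−1), and if j > k then Σ_{i=1}^k a_ij = min(α_j^-, k). -/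
lemma card_filter_lt_fin (n k : ℕ) (hk : k ≤ n) :
    (Finset.univ.filter fun i : Fin n => (i : ℕ) < k).card = k := by
  have h : ∀ m ∈ Finset.range k, m < n := fun m hm =>
    lt_of_lt_of_le (Finset.mem_range.mp hm) hk
  have : (Finset.univ.filter fun i : Fin n => (i : ℕ) < k) =
      (Finset.range k).attachFin h := by
    ext i
    simp [Finset.mem_attachFin]
  rw [this, Finset.card_attachFin, Finset.card_range]

private theorem stmt17_aux (n : ℕ) (A : Fin n → Fin n → ℕ)
    (h01 : ∀ i j, A i j = 0 ∨ A i j = 1) (hdiag : ∀ i, A i i = 0)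
    (hnest : ∀ i j k : Fin n, i ≠ j → i ≠ k → j ≠ k → i < j → A j k = 1 → A i k = 1) :
    ∀ k : ℕ, 1 ≤ k → k ≤ n → ∀ j : Fin n,
      ((j : ℕ) < k →
        (∑ i : Fin n, if (i : ℕ) < k then A i j else 0) = min (∑ i, A i j) (k - 1)) ∧
      (k ≤ (j : ℕ) →
        (∑ i : Fin n, if (i : ℕ) < k then A i j else 0) = min (∑ i, A i j) k) := by
  intro k hk1 hkn c
  set T : Finset (Fin n) := Finset.univ.filter fun i : Fin n => (i : ℕ) < k with hT
  have hsum : (∑ i : Fin n, if (i : ℕ) < k then A i c else 0) = ∑ i ∈ T, A i c :=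
    (Finset.sum_filter _ _).symm
  have hTcard : T.card = k := card_filter_lt_fin n k hkn
  set α : ℕ := ∑ i, A i c with hα
  set S : ℕ := ∑ i ∈ T, A i c with hS
  -- S ≤ α
  have hSα : S ≤ α := Finset.sum_le_sum_of_subset (Finset.subset_univ T)
  -- S ≤ card of rows in T other than c
  have hle1 : ∀ i, A i c ≤ 1 := fun i => by rcases h01 i c with h | h <;> omega
  have hScard : S ≤ (T.erase c).card := by
    have : S = ∑ i ∈ T.erase c, A i c := by
      rcases em (c ∈ T) with h | h
      · rw [hS, ← Finset.sum_erase_add T _ h, hdiag c]; ring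
      · rw [Finset.erase_eq_of_notMem h]
    rw [this]
    calc ∑ i ∈ T.erase c, A i c ≤ ∑ _i ∈ T.erase c, 1 :=
          Finset.sum_le_sum fun i _ => hle1 i
      _ = (T.erase c).card := by simp
  -- if S < α then all rows in T other than c are 1
  have hkey : S < α → S = (T.erase c).card := by
    intro hlt
    have : ∑ i ∈ Finset.univ \ T, A i c ≠ 0 := by
      have h3 : ∑ i ∈ Finset.univ \ T, A i c + ∑ i ∈ T, A i c = α :=
        Finset.sum_sdiff (Finset.subset_univ T)
      omega
    obtain ⟨w, hwmem, hw⟩ := Finset.exists_ne_zero_of_sum_ne_zero this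
    have hw1 : A w c = 1 := by rcases h01 w c with h | h <;> omega
    have hwT : ¬ (w : ℕ) < k := by
      simp only [Finset.mem_sdiff, hT, Finset.mem_filter] at hwmem
      tauto
    have hwc : w ≠ c := fun h => by rw [h, hdiag] at hw1; omega
    have hall : ∀ i ∈ T.erase c, A i c = 1 := by
      intro i hi
      rw [Finset.mem_erase, hT, Finset.mem_filter] at hi
      have hiw : i < w := by
        have := hi.2.2
        exact Fin.lt_def.mpr (by omega)
      exact hnest i w c (Fin.ne_of_lt hiw) hi.1 hwc hiw hw1
    have : S = ∑ i ∈ T.erase c, A i c := by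
      rcases em (c ∈ T) with h | h
      · rw [hS, ← Finset.sum_erase_add T _ h, hdiag c]; ring
      · rw [Finset.erase_eq_of_notMem h]
    rw [this, Finset.sum_congr rfl hall]
    simp
  constructor
  · intro hck
    have hcT : c ∈ T := by simp [hT, hck]
    have hec : (T.erase c).card = k - 1 := by
      rw [Finset.card_erase_of_mem hcT, hTcard]
    rw [hsum]
    rcases lt_or_ge S α with h | h
    · have h2 := hkey h; omega
    · have : S = α := le_antisymm hSα h
      omega
  · intro hck
    have hcT : c ∉ T := by simp [hT]; omega
    have hec : (T.erase c).card = k := by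
      rw [Finset.erase_eq_of_notMem hcT, hTcard]
    rw [hsum]
    rcases lt_or_ge S α with h | h
    · have h2 := hkey h; omega
    · have : S = α := le_antisymm hSα h
      omega

/-- under the nesting condition, the number of ones in the first `k`
rows of column `j` is `min(α_j⁻, k - 1)` if `j ≤ k` (1-based; `j < k` 0-based) and
`min(α_j⁻, k)` otherwise. -/
theorem stmt17 (n : ℕ) (A : Fin n → Fin n → ℕ)
    (h01 : ZeroOne n A) (hdiag : ZeroDiag n A)
    (hnest : Nested n A) :
    ∀ k : ℕ, 1 ≤ k → k ≤ n → ∀ j : Fin n,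
      ((j : ℕ) < k →
        (∑ i : Fin n, if (i : ℕ) < k then A i j else 0) = min (indeg n A j) (k - 1)) ∧
      (k ≤ (j : ℕ) →
        (∑ i : Fin n, if (i : ℕ) < k then A i j else 0) = min (indeg n A j) k) :=
  stmt17_aux n A h01 hdiag hnest
end
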